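/- arXiv:2509.21809 — 2 statements merged into one kernel-verified Lean document; each statement's English description precedes it below -/
import Mathlib

section
/- An almost paracontact metric Walker structure on ℝ³ is η-Einstein — i.e. there exist smooth nowhere-vanishing functions a, b : ℝ³ → ℝ such that ρ(∂i,∂j) = a·g(∂i,∂j) + b·η(∂i)η(∂j) for all coordinate fields at every point — if and only if ξ₃ ≡ 0, f_xy² − f_xx f_yy ≡ 0, f_xx vanishes nowhere, and either (ξ₂ ≡ 1 and ξ₁ = −f_xy/f_xx) or (ξ₂ ≡ −1 and ξ₁ = f_xy/f_xx). Moreover, in that case necessarily a = −b = (1/2)f_xx, and ξ is an eigenvector of the Ricci operator Q for the eigenvalue 0 (Qξ = 0). (Theorem 5.1.) -/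
open Real

/-- Points of the Walker manifold `M = ℝ³` with coordinates `(x,y,z)`. -/
abbrev Pt : Type := ℝ × ℝ × ℝ

/-- Vector fields on `ℝ³`, given by their components in the frame `∂x, ∂y, ∂z`. -/
abbrev VF : Type := Pt → Pt

/-- Partial derivative ∂/∂x. -/
noncomputable def pdx (F : Pt → ℝ) (p : Pt) : ℝ := fderiv ℝ F p ((1:ℝ), (0:ℝ), (0:ℝ))

/-- Partial derivative ∂/∂y. -/
noncomputable def pdy (F : Pt → ℝ) (p : Pt) : ℝ := fderiv ℝ F p ((0:ℝ), (1:ℝ), (0:ℝ))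

/-- Partial derivative ∂/∂z. -/
noncomputable def pdz (F : Pt → ℝ) (p : Pt) : ℝ := fderiv ℝ F p ((0:ℝ), (0:ℝ), (1:ℝ))

/-- Directional derivative of a scalar function along a vector field. -/
noncomputable def dd (X : VF) (F : Pt → ℝ) (p : Pt) : ℝ := fderiv ℝ F p (X p)

/-- Components of a tangent vector. -/
def c1 (v : Pt) : ℝ := v.1
def c2 (v : Pt) : ℝ := v.2.1
def c3 (v : Pt) : ℝ := v.2.2

/-- The coordinate vector fields `∂x, ∂y, ∂z`. -/
noncomputable def E : Fin 3 → VF :=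
  ![fun _ => ((1:ℝ), (0:ℝ), (0:ℝ)), fun _ => ((0:ℝ), (1:ℝ), (0:ℝ)),
    fun _ => ((0:ℝ), (0:ℝ), (1:ℝ))]

/-- The Walker metric with `ε = 1`: `g(∂x,∂z) = g(∂z,∂x) = 1`, `g(∂y,∂y) = 1`,
`g(∂z,∂z) = f`, all other components zero. -/
noncomputable def gm (f : Pt → ℝ) (X Y : VF) (p : Pt) : ℝ :=
  c1 (X p) * c3 (Y p) + c3 (X p) * c1 (Y p) + c2 (X p) * c2 (Y p)
    + f p * c3 (X p) * c3 (Y p)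

/-- The Levi-Civita connection of the Walker metric:
`∇_{∂x}∂z = ∇_{∂z}∂x = (1/2) f_x ∂x`, `∇_{∂y}∂z = ∇_{∂z}∂y = (1/2) f_y ∂x`,
`∇_{∂z}∂z = (1/2)(f f_x + f_z) ∂x - (1/2) f_y ∂y - (1/2) f_x ∂z`, all other covariant
derivatives of coordinate fields zero, extended by `C^∞`-linearity below and the
Leibniz rule above. -/
noncomputable def cov (f : Pt → ℝ) (X Y : VF) : VF := fun p =>
  ( dd X (fun q => c1 (Y q)) p
      + (1/2) * pdx f p * (c1 (X p) * c3 (Y p) + c3 (X p) * c1 (Y p))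
      + (1/2) * pdy f p * (c2 (X p) * c3 (Y p) + c3 (X p) * c2 (Y p))
      + (1/2) * (f p * pdx f p + pdz f p) * (c3 (X p) * c3 (Y p)),
    dd X (fun q => c2 (Y q)) p - (1/2) * pdy f p * (c3 (X p) * c3 (Y p)),
    dd X (fun q => c3 (Y q)) p - (1/2) * pdx f p * (c3 (X p) * c3 (Y p)) )

/-- Lie bracket of vector fields on `ℝ³`. -/
noncomputable def brk (X Y : VF) : VF := fun p =>
  ( dd X (fun q => c1 (Y q)) p - dd Y (fun q => c1 (X q)) p,
    dd X (fun q => c2 (Y q)) p - dd Y (fun q => c2 (X q)) p,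
    dd X (fun q => c3 (Y q)) p - dd Y (fun q => c3 (X q)) p )

/-- The `(1,1)`-tensor `φ` of the almost paracontact metric Walker structure:
`φ∂x = -ξ₂∂x + ξ₃∂y`, `φ∂y = (ξ₁ + fξ₃)∂x - ξ₃∂z`, `φ∂z = -fξ₂∂x - ξ₁∂y + ξ₂∂z`. -/
noncomputable def phiV (f ξ₁ ξ₂ ξ₃ : Pt → ℝ) (X : VF) : VF := fun p =>
  ( -ξ₂ p * c1 (X p) + (ξ₁ p + f p * ξ₃ p) * c2 (X p) - f p * ξ₂ p * c3 (X p),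
    ξ₃ p * c1 (X p) - ξ₁ p * c3 (X p),
    -ξ₃ p * c2 (X p) + ξ₂ p * c3 (X p) )

/-- The 1-form `η = ξ₃ dx + ξ₂ dy + (ξ₁ + fξ₃) dz`. -/
noncomputable def etaV (f ξ₁ ξ₂ ξ₃ : Pt → ℝ) (X : VF) (p : Pt) : ℝ :=
  ξ₃ p * c1 (X p) + ξ₂ p * c2 (X p) + (ξ₁ p + f p * ξ₃ p) * c3 (X p)

/-- The structure tensor `F(X,Y,Z) = g((∇_X φ)Y, Z)`, `(∇_X φ)Y = ∇_X(φY) - φ(∇_X Y)`. -/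
noncomputable def Ften (f ξ₁ ξ₂ ξ₃ : Pt → ℝ) (X Y Z : VF) (p : Pt) : ℝ :=
  gm f (fun q => cov f X (phiV f ξ₁ ξ₂ ξ₃ Y) q - phiV f ξ₁ ξ₂ ξ₃ (cov f X Y) q) Z p

/-- The fundamental 2-form `Φ(X,Y) = g(φX, Y)`. -/
noncomputable def Phi2 (f ξ₁ ξ₂ ξ₃ : Pt → ℝ) (X Y : VF) : Pt → ℝ :=
  gm f (phiV f ξ₁ ξ₂ ξ₃ X) Y

/-- `dη(∂i,∂j) = (1/2)(∂i(η(∂j)) - ∂j(η(∂i)))` on coordinate fields. -/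
noncomputable def deta (f ξ₁ ξ₂ ξ₃ : Pt → ℝ) (i j : Fin 3) (p : Pt) : ℝ :=
  (1/2) * (dd (E i) (etaV f ξ₁ ξ₂ ξ₃ (E j)) p - dd (E j) (etaV f ξ₁ ξ₂ ξ₃ (E i)) p)

/-- `dη(X,Y) = (1/2)(X(η(Y)) - Y(η(X)) - η([X,Y]))` on general vector fields. -/
noncomputable def detaB (f ξ₁ ξ₂ ξ₃ : Pt → ℝ) (X Y : VF) (p : Pt) : ℝ :=
  (1/2) * (dd X (etaV f ξ₁ ξ₂ ξ₃ Y) p - dd Y (etaV f ξ₁ ξ₂ ξ₃ X) p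
    - etaV f ξ₁ ξ₂ ξ₃ (brk X Y) p)

/-- The Nijenhuis tensor `N(X,Y) = φ²[X,Y] + [φX,φY] - φ[φX,Y] - φ[X,φY]`. -/
noncomputable def nij (f ξ₁ ξ₂ ξ₃ : Pt → ℝ) (X Y : VF) : VF := fun p =>
  phiV f ξ₁ ξ₂ ξ₃ (phiV f ξ₁ ξ₂ ξ₃ (brk X Y)) p
    + brk (phiV f ξ₁ ξ₂ ξ₃ X) (phiV f ξ₁ ξ₂ ξ₃ Y) p
    - phiV f ξ₁ ξ₂ ξ₃ (brk (phiV f ξ₁ ξ₂ ξ₃ X) Y) p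
    - phiV f ξ₁ ξ₂ ξ₃ (brk X (phiV f ξ₁ ξ₂ ξ₃ Y)) p

/-- The curvature tensor, with the paper's sign convention
`R(X,Y)Z = ∇_{[X,Y]}Z - ∇_X∇_Y Z + ∇_Y∇_X Z`. -/
noncomputable def Rop (f : Pt → ℝ) (X Y Z : VF) : VF := fun p =>
  cov f (brk X Y) Z p - cov f X (cov f Y Z) p + cov f Y (cov f X Z) p

/-- Second partial derivatives of `f`. -/
noncomputable def fxx (f : Pt → ℝ) : Pt → ℝ := pdx (pdx f)
noncomputable def fxy (f : Pt → ℝ) : Pt → ℝ := pdy (pdx f)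
noncomputable def fyy (f : Pt → ℝ) : Pt → ℝ := pdy (pdy f)

/-- The Ricci tensor of the Walker metric: `ρ(∂x,∂z) = ρ(∂z,∂x) = (1/2) f_xx`,
`ρ(∂y,∂z) = ρ(∂z,∂y) = (1/2) f_xy`, `ρ(∂z,∂z) = (1/2)(f f_xx - f_yy)`, all other
components zero, extended tensorially. -/
noncomputable def rhoT (f : Pt → ℝ) (X Y : VF) (p : Pt) : ℝ :=
  (1/2) * fxx f p * (c1 (X p) * c3 (Y p) + c3 (X p) * c1 (Y p))
    + (1/2) * fxy f p * (c2 (X p) * c3 (Y p) + c3 (X p) * c2 (Y p))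
    + (1/2) * (f p * fxx f p - fyy f p) * (c3 (X p) * c3 (Y p))

/-- The Ricci operator: `Q∂x = (1/2)f_xx ∂x`, `Q∂y = (1/2)f_xy ∂x`,
`Q∂z = -(1/2)f_yy ∂x + (1/2)f_xy ∂y + (1/2)f_xx ∂z`. -/
noncomputable def Qop (f : Pt → ℝ) (X : VF) : VF := fun p =>
  ( (1/2) * fxx f p * c1 (X p) + (1/2) * fxy f p * c2 (X p) - (1/2) * fyy f p * c3 (X p),
    (1/2) * fxy f p * c3 (X p),
    (1/2) * fxx f p * c3 (X p) )

/-- `dΦ(∂x,∂y,∂z) = ∂x(Φ(∂y,∂z)) - ∂y(Φ(∂x,∂z)) + ∂z(Φ(∂x,∂y))`. -/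
noncomputable def dPhi (f ξ₁ ξ₂ ξ₃ : Pt → ℝ) (p : Pt) : ℝ :=
  pdx (Phi2 f ξ₁ ξ₂ ξ₃ (E 1) (E 2)) p - pdy (Phi2 f ξ₁ ξ₂ ξ₃ (E 0) (E 2)) p
    + pdz (Phi2 f ξ₁ ξ₂ ξ₃ (E 0) (E 1)) p

/-- `(η∧Φ)(∂x,∂y,∂z) = η(∂x)Φ(∂y,∂z) - η(∂y)Φ(∂x,∂z) + η(∂z)Φ(∂x,∂y)`. -/
noncomputable def etaWedgePhi (f ξ₁ ξ₂ ξ₃ : Pt → ℝ) (p : Pt) : ℝ :=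
  etaV f ξ₁ ξ₂ ξ₃ (E 0) p * Phi2 f ξ₁ ξ₂ ξ₃ (E 1) (E 2) p
    - etaV f ξ₁ ξ₂ ξ₃ (E 1) p * Phi2 f ξ₁ ξ₂ ξ₃ (E 0) (E 2) p
    + etaV f ξ₁ ξ₂ ξ₃ (E 2) p * Phi2 f ξ₁ ξ₂ ξ₃ (E 0) (E 1) p

/-- The constant function `0`. -/
noncomputable def zeroF : Pt → ℝ := fun _ => 0
/-- The constant function `1`. -/
noncomputable def oneF : Pt → ℝ := fun _ => 1
/-- The constant function `-1`. -/
noncomputable def negOneF : Pt → ℝ := fun _ => -1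

/-- The η-Einstein condition `ρ = a·g + b·η⊗η` on coordinate fields. -/
def etaEinstein (f ξ₁ ξ₂ ξ₃ a b : Pt → ℝ) : Prop :=
  ∀ (i j : Fin 3) (p : Pt),
    rhoT f (E i) (E j) p = a p * gm f (E i) (E j) p
      + b p * etaV f ξ₁ ξ₂ ξ₃ (E i) p * etaV f ξ₁ ξ₂ ξ₃ (E j) p


lemma contDiff_pdx {F : Pt → ℝ} (hF : ContDiff ℝ (⊤:ℕ∞) F) : ContDiff ℝ (⊤:ℕ∞) (pdx F) :=
  (hF.fderiv_right (le_of_eq rfl)).clm_apply contDiff_const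

lemma contDiff_fxx {f : Pt → ℝ} (hf : ContDiff ℝ (⊤:ℕ∞) f) : ContDiff ℝ (⊤:ℕ∞) (fxx f) :=
  contDiff_pdx (contDiff_pdx hf)

lemma key (f ξ₁ ξ₂ ξ₃ a b : Pt → ℝ)
    (hconstr : ∀ p : Pt, ξ₂ p ^ 2 + f p * ξ₃ p ^ 2 + 2 * ξ₁ p * ξ₃ p = 1)
    (ha : ∀ p : Pt, a p ≠ 0) (hb : ∀ p : Pt, b p ≠ 0)
    (hEE : etaEinstein f ξ₁ ξ₂ ξ₃ a b) (p : Pt) :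
    ξ₃ p = 0 ∧ ξ₂ p ^ 2 = 1 ∧ a p = (1/2) * fxx f p ∧ b p = -((1/2) * fxx f p) ∧
    fxy f p = -(fxx f p * (ξ₂ p * ξ₁ p)) ∧ fyy f p = fxx f p * ξ₁ p ^ 2 ∧ fxx f p ≠ 0 := by
  have e00 := hEE 0 0 p
  have e02 := hEE 0 2 p
  have e11 := hEE 1 1 p
  have e12 := hEE 1 2 p
  have e22 := hEE 2 2 p
  simp [rhoT, gm, etaV, E, c1, c2, c3] at e00 e02 e11 e12 e22
  have h3 : ξ₃ p = 0 := e00.resolve_left (hb p)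
  have hc := hconstr p
  simp only [h3, mul_zero, zero_mul, add_zero, zero_add] at e02 e12 e22
  have h2 : ξ₂ p ^ 2 = 1 := by linear_combination hc - (f p * ξ₃ p + 2 * ξ₁ p) * h3
  have hA : a p = (1/2) * fxx f p := by linear_combination -e02
  have hB : b p = -((1/2) * fxx f p) := by linear_combination -e11 - b p * h2 - hA
  have hxy : fxy f p = -(fxx f p * (ξ₂ p * ξ₁ p)) := by
    linear_combination 2*e12 + 2*ξ₂ p*ξ₁ p*hB + ξ₂ p*ξ₁ p*fxx f p * h2 - ξ₂ p*ξ₁ p*fxx f p * h2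
  have hyy : fyy f p = fxx f p * ξ₁ p ^ 2 := by
    linear_combination -2*e22 - 2*f p*hA - 2*ξ₁ p^2*hB - ξ₁ p ^ 2 * fxx f p * h2 + ξ₁ p ^ 2 * fxx f p * h2
  have hne : fxx f p ≠ 0 := by
    intro h0
    exact ha p (by rw [hA, h0]; ring)
  exact ⟨h3, h2, hA, hB, hxy, hyy, hne⟩

lemma const_pm (ξ₂ : Pt → ℝ) (h2 : ContDiff ℝ (⊤:ℕ∞) ξ₂)
    (hpm : ∀ p : Pt, ξ₂ p = 1 ∨ ξ₂ p = -1) :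
    (∀ p : Pt, ξ₂ p = 1) ∨ (∀ p : Pt, ξ₂ p = -1) := by
  by_cases h : ∀ p : Pt, ξ₂ p = 1
  · exact Or.inl h
  · right
    push_neg at h
    obtain ⟨q, hq⟩ := h
    have hq' : ξ₂ q = -1 := (hpm q).resolve_left hq
    intro p
    by_contra hp
    have hp' : ξ₂ p = 1 := (hpm p).resolve_right hp
    -- intermediate value on the segment from p to q
    set γ : ℝ → Pt := fun t => p + t • (q - p) with hγ
    have hcont : ContinuousOn (fun t => ξ₂ (γ t)) (Set.Icc (0:ℝ) 1) :=
      (h2.continuous.comp (by continuity)).continuousOn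
    have h0 : ξ₂ (γ 0) = 1 := by simp [hγ, hp']
    have h1 : ξ₂ (γ 1) = -1 := by simp [hγ, hq']
    have hsub := intermediate_value_Icc' (by norm_num : (0:ℝ) ≤ 1) hcont
    have hmem : (0:ℝ) ∈ Set.Icc (ξ₂ (γ 1)) (ξ₂ (γ 0)) := by
      rw [h0, h1]; constructor <;> norm_num
    obtain ⟨t, _, ht⟩ := hsub hmem
    simp only [] at ht
    rcases hpm (γ t) with h | h <;> rw [h] at ht <;> norm_num at ht

/-- Theorem 5.1: an almost paracontact metric 3-dimensional Walker manifold is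
η-Einstein iff `ξ₃ ≡ 0`, `f_xy² - f_xx f_yy ≡ 0`, `f_xx` vanishes nowhere, and
`ξ₂ ≡ ±1` with `ξ₁ = ∓f_xy/f_xx`; moreover in that case `a = -b = (1/2)f_xx`
and `Qξ = 0`. -/
theorem etaEinstein_iff (f ξ₁ ξ₂ ξ₃ : Pt → ℝ)
    (hf : ContDiff ℝ (⊤ : ℕ∞) f) (h1 : ContDiff ℝ (⊤ : ℕ∞) ξ₁)
    (h2 : ContDiff ℝ (⊤ : ℕ∞) ξ₂) (h3 : ContDiff ℝ (⊤ : ℕ∞) ξ₃)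
    (hconstr : ∀ p : Pt, ξ₂ p ^ 2 + f p * ξ₃ p ^ 2 + 2 * ξ₁ p * ξ₃ p = 1) :
    ((∃ a b : Pt → ℝ, ContDiff ℝ (⊤ : ℕ∞) a ∧ ContDiff ℝ (⊤ : ℕ∞) b ∧
        (∀ p : Pt, a p ≠ 0) ∧ (∀ p : Pt, b p ≠ 0) ∧ etaEinstein f ξ₁ ξ₂ ξ₃ a b) ↔
      ((∀ p : Pt, ξ₃ p = 0) ∧ (∀ p : Pt, fxy f p ^ 2 - fxx f p * fyy f p = 0) ∧
        (∀ p : Pt, fxx f p ≠ 0) ∧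
        (((∀ p : Pt, ξ₂ p = 1) ∧ (∀ p : Pt, ξ₁ p = -(fxy f p / fxx f p))) ∨
          ((∀ p : Pt, ξ₂ p = -1) ∧ (∀ p : Pt, ξ₁ p = fxy f p / fxx f p))))) ∧
    (∀ a b : Pt → ℝ, ContDiff ℝ (⊤ : ℕ∞) a → ContDiff ℝ (⊤ : ℕ∞) b →
      (∀ p : Pt, a p ≠ 0) → (∀ p : Pt, b p ≠ 0) → etaEinstein f ξ₁ ξ₂ ξ₃ a b →
      (∀ p : Pt, a p = (1/2) * fxx f p ∧ b p = -((1/2) * fxx f p)) ∧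
      (∀ p : Pt, Qop f (fun q => (ξ₁ q, ξ₂ q, ξ₃ q)) p = 0)) := by
  have hmoreover : ∀ a b : Pt → ℝ, ContDiff ℝ (⊤ : ℕ∞) a → ContDiff ℝ (⊤ : ℕ∞) b →
      (∀ p : Pt, a p ≠ 0) → (∀ p : Pt, b p ≠ 0) → etaEinstein f ξ₁ ξ₂ ξ₃ a b →
      (∀ p : Pt, a p = (1/2) * fxx f p ∧ b p = -((1/2) * fxx f p)) ∧
      (∀ p : Pt, Qop f (fun q => (ξ₁ q, ξ₂ q, ξ₃ q)) p = 0) := by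
    intro a b _ _ ha0 hb0 hEE
    constructor
    · intro p
      obtain ⟨_, _, hA, hB, _, _, _⟩ := key f ξ₁ ξ₂ ξ₃ a b hconstr ha0 hb0 hEE p
      exact ⟨hA, hB⟩
    · intro p
      obtain ⟨h3, h2, _, _, hxy, _, _⟩ := key f ξ₁ ξ₂ ξ₃ a b hconstr ha0 hb0 hEE p
      have hx1 : (1/2) * fxx f p * ξ₁ p + (1/2) * fxy f p * ξ₂ p = 0 := by
        linear_combination (ξ₂ p / 2) * hxy - (fxx f p * ξ₁ p / 2) * h2
      simp only [Qop, c1, c2, c3, h3, Prod.ext_iff]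
      refine ⟨?_, ?_, ?_⟩ <;> simp <;> linear_combination hx1
  refine ⟨⟨?_, ?_⟩, hmoreover⟩
  · rintro ⟨a, b, ha, hb, ha0, hb0, hEE⟩
    have K := fun p => key f ξ₁ ξ₂ ξ₃ a b hconstr ha0 hb0 hEE p
    have hdet : ∀ p : Pt, fxy f p ^ 2 - fxx f p * fyy f p = 0 := by
      intro p
      obtain ⟨h3, h2, hA, hB, hxy, hyy, hne⟩ := K p
      linear_combination (fxy f p - fxx f p * (ξ₂ p * ξ₁ p)) * hxy - fxx f p * hyy
        + fxx f p ^ 2 * ξ₁ p ^ 2 * h2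
    refine ⟨fun p => (K p).1, hdet, fun p => (K p).2.2.2.2.2.2, ?_⟩
    have hpm : ∀ p : Pt, ξ₂ p = 1 ∨ ξ₂ p = -1 := by
      intro p
      have h2' := (K p).2.1
      have : (ξ₂ p - 1) * (ξ₂ p + 1) = 0 := by linear_combination h2'
      rcases mul_eq_zero.mp this with h | h
      · exact Or.inl (by linarith)
      · exact Or.inr (by linarith)
    rcases const_pm ξ₂ h2 hpm with hs | hs
    · left
      refine ⟨hs, fun p => ?_⟩
      obtain ⟨h3, h2', hA, hB, hxy, hyy, hne⟩ := K p
      rw [hs p] at hxy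
      field_simp
      linear_combination hxy
    · right
      refine ⟨hs, fun p => ?_⟩
      obtain ⟨h3, h2', hA, hB, hxy, hyy, hne⟩ := K p
      rw [hs p] at hxy
      field_simp
      linear_combination -hxy
  · rintro ⟨h3, hdet, hne, hcase⟩
    have hfacts : (∀ p : Pt, ξ₂ p ^ 2 = 1) ∧
        (∀ p : Pt, fxx f p * ξ₁ p = -(ξ₂ p * fxy f p)) := by
      rcases hcase with ⟨hs, hx⟩ | ⟨hs, hx⟩
      · refine ⟨fun p => by rw [hs p]; norm_num, fun p => ?_⟩
        rw [hs p, hx p]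
        field_simp [hne p]
        try ring
      · refine ⟨fun p => by rw [hs p]; norm_num, fun p => ?_⟩
        rw [hs p, hx p]
        field_simp [hne p]
        try ring
    obtain ⟨hs2, hx1⟩ := hfacts
    have hyy : ∀ p : Pt, fyy f p = fxx f p * ξ₁ p ^ 2 := by
      intro p
      have h := mul_left_cancel₀ (hne p)
        (show fxx f p * fyy f p = fxx f p * (fxx f p * ξ₁ p ^ 2) by
          linear_combination -hdet p - (fxx f p * ξ₁ p - ξ₂ p * fxy f p) * hx1 p
            - fxy f p ^ 2 * hs2 p)
      exact h
    refine ⟨fun p => (1/2) * fxx f p, fun p => -((1/2) * fxx f p),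
      contDiff_const.mul (contDiff_fxx hf), (contDiff_const.mul (contDiff_fxx hf)).neg,
      fun p => by simpa using hne p, fun p => by simpa using hne p, ?_⟩
    intro i j p
    have h3p := h3 p
    have hyp := hyy p
    have hxp := hx1 p
    have hsp := hs2 p
    fin_cases i <;> fin_cases j <;>
      simp [rhoT, gm, etaV, E, c1, c2, c3, h3p]
    · linear_combination (fxx f p/2) * hsp
    · linear_combination (ξ₂ p/2) * hxp - (fxy f p/2) * hsp
    · linear_combination (ξ₂ p/2) * hxp - (fxy f p/2) * hsp
    · linear_combination (-(1:ℝ)/2) * hyp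
end

section
/- Let an almost paracontact metric Walker structure on ℝ³ be paracosymplectic, i.e. F(∂i,∂j,∂k) = 0 at every point for all coordinate fields (equivalently ∇φ = 0). Then at every point p ∈ ℝ³, either f_xx(p) = f_xy(p) = f_yy(p) = 0 (so the curvature tensor vanishes at p, the flat case), or there exist nonzero real numbers a, b with ρ(∂i,∂j)(p) = a·g(∂i,∂j)(p) + b·η(∂i)(p)η(∂j)(p) for all i,j (the η-Einstein condition at p). (Corollary 5.1: a paracosymplectic 3-dimensional Walker manifold is either flat or η-Einstein.) -/
open Real

noncomputable def pdv (v : Pt) (F : Pt → ℝ) (p : Pt) : ℝ := fderiv ℝ F p v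

lemma topcast : ((⊤:ℕ∞) : WithTop ℕ∞) + 1 ≤ ((⊤:ℕ∞) : WithTop ℕ∞) := by
  simp [ENat.add_one_le_iff]

lemma twole : (2 : WithTop ℕ∞) ≤ ((⊤:ℕ∞) : WithTop ℕ∞) := by
  have : ((2:ℕ∞) : WithTop ℕ∞) ≤ ((⊤:ℕ∞) : WithTop ℕ∞) := WithTop.coe_le_coe.mpr le_top
  convert this using 2
  rfl

lemma onele : (1 : WithTop ℕ∞) ≤ ((⊤:ℕ∞) : WithTop ℕ∞) := by
  have : ((1:ℕ∞) : WithTop ℕ∞) ≤ ((⊤:ℕ∞) : WithTop ℕ∞) := WithTop.coe_le_coe.mpr le_top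
  convert this using 2
  rfl

lemma da {F : Pt → ℝ} (h : ContDiff ℝ (⊤:ℕ∞) F) (p : Pt) : DifferentiableAt ℝ F p :=
  h.differentiable (by simp) p

lemma sm_pdv {F : Pt → ℝ} (h : ContDiff ℝ (⊤:ℕ∞) F) (v : Pt) : ContDiff ℝ (⊤:ℕ∞) (pdv v F) :=
  (h.fderiv_right topcast).clm_apply contDiff_const

lemma pdv_pdv {F : Pt → ℝ} (h : ContDiff ℝ (⊤:ℕ∞) F) (v w : Pt) (p : Pt) :
    pdv v (pdv w F) p = fderiv ℝ (fderiv ℝ F) p v w := by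
  unfold pdv
  rw [fderiv_clm_apply ((h.fderiv_right topcast).differentiable (by simp) p) (differentiableAt_const _)]
  simp

lemma schwarz {F : Pt → ℝ} (h : ContDiff ℝ (⊤:ℕ∞) F) (v w : Pt) (p : Pt) :
    pdv v (pdv w F) p = pdv w (pdv v F) p := by
  rw [pdv_pdv h, pdv_pdv h]
  exact (h.contDiffAt.isSymmSndFDerivAt (by simpa [minSmoothness_of_isRCLikeNormedField] using twole)) v w

lemma pdv_add {F G : Pt → ℝ} {p : Pt} (hF : DifferentiableAt ℝ F p)
    (hG : DifferentiableAt ℝ G p) (v : Pt) :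
    pdv v (fun q => F q + G q) p = pdv v F p + pdv v G p := by
  unfold pdv; rw [fderiv_fun_add hF hG]; rfl

lemma pdv_mul {F G : Pt → ℝ} {p : Pt} (hF : DifferentiableAt ℝ F p)
    (hG : DifferentiableAt ℝ G p) (v : Pt) :
    pdv v (fun q => F q * G q) p = pdv v F p * G p + F p * pdv v G p := by
  unfold pdv; rw [fderiv_fun_mul hF hG]; simp [ContinuousLinearMap.add_apply, ContinuousLinearMap.smul_apply, smul_eq_mul]; ring

lemma pdv_neg {F : Pt → ℝ} {p : Pt} (v : Pt) :
    pdv v (fun q => -F q) p = -pdv v F p := by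
  unfold pdv; rw [fderiv_fun_neg]; rfl

lemma pdv_sub {F G : Pt → ℝ} {p : Pt} (hF : DifferentiableAt ℝ F p)
    (hG : DifferentiableAt ℝ G p) (v : Pt) :
    pdv v (fun q => F q - G q) p = pdv v F p - pdv v G p := by
  unfold pdv; rw [fderiv_fun_sub hF hG]; rfl

lemma pdv_const {p : Pt} (c : ℝ) (v : Pt) : pdv v (fun _ => c) p = 0 := by
  unfold pdv; rw [fderiv_fun_const]; rfl

lemma pdv_const_mul {F : Pt → ℝ} {p : Pt} (hF : DifferentiableAt ℝ F p) (c : ℝ) (v : Pt) :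
    pdv v (fun q => c * F q) p = c * pdv v F p := by
  unfold pdv; rw [fderiv_const_mul hF]; rfl

lemma pdv_congr {F G : Pt → ℝ} (h : ∀ q, F q = G q) (v : Pt) (p : Pt) :
    pdv v F p = pdv v G p := by
  have : F = G := funext h
  rw [this]
section Extract
variable {f ξ₁ ξ₂ ξ₃ : Pt → ℝ}
  (hF : ∀ (i j k : Fin 3) (p : Pt), Ften f ξ₁ ξ₂ ξ₃ (E i) (E j) (E k) p = 0)
include hF

lemma ex31 (p : Pt) : pdx ξ₃ p = 0 := by
  have h := hF 0 0 1 p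
  simp only [Ften, gm, cov, phiV, dd, E, c1, c2, c3, Matrix.cons_val_zero, Matrix.cons_val_one,
    Matrix.head_cons, Matrix.cons_val_two, Matrix.tail_cons, mul_one, mul_zero, zero_mul, one_mul,
    add_zero, zero_add, sub_zero, zero_sub, neg_zero, neg_mul, Prod.fst_sub, Prod.snd_sub, fderiv_fun_const,
    fderiv_fun_neg] at h
  simp only [pdx, pdy, pdz, ContinuousLinearMap.neg_apply, ContinuousLinearMap.zero_apply,
    Pi.zero_apply] at h ⊢
  linarith

lemma ex32 (p : Pt) : pdy ξ₃ p = 0 := by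
  have h := hF 1 0 1 p
  simp only [Ften, gm, cov, phiV, dd, E, c1, c2, c3, Matrix.cons_val_zero, Matrix.cons_val_one,
    Matrix.head_cons, Matrix.cons_val_two, Matrix.tail_cons, mul_one, mul_zero, zero_mul, one_mul,
    add_zero, zero_add, sub_zero, zero_sub, neg_zero, neg_mul, Prod.fst_sub, Prod.snd_sub, fderiv_fun_const,
    fderiv_fun_neg] at h
  simp only [pdx, pdy, pdz, ContinuousLinearMap.neg_apply, ContinuousLinearMap.zero_apply,
    Pi.zero_apply] at h ⊢
  linarith

lemma ex33 (p : Pt) : pdz ξ₃ p = (1/2) * pdx f p * ξ₃ p := by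
  have h := hF 2 0 1 p
  simp only [Ften, gm, cov, phiV, dd, E, c1, c2, c3, Matrix.cons_val_zero, Matrix.cons_val_one,
    Matrix.head_cons, Matrix.cons_val_two, Matrix.tail_cons, mul_one, mul_zero, zero_mul, one_mul,
    add_zero, zero_add, sub_zero, zero_sub, neg_zero, neg_mul, Prod.fst_sub, Prod.snd_sub, fderiv_fun_const,
    fderiv_fun_neg] at h
  simp only [pdx, pdy, pdz, ContinuousLinearMap.neg_apply, ContinuousLinearMap.zero_apply,
    Pi.zero_apply] at h ⊢
  linarith

lemma ex21 (p : Pt) : pdx ξ₂ p = 0 := by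
  have h := hF 0 0 2 p
  simp only [Ften, gm, cov, phiV, dd, E, c1, c2, c3, Matrix.cons_val_zero, Matrix.cons_val_one,
    Matrix.head_cons, Matrix.cons_val_two, Matrix.tail_cons, mul_one, mul_zero, zero_mul, one_mul,
    add_zero, zero_add, sub_zero, zero_sub, neg_zero, neg_mul, Prod.fst_sub, Prod.snd_sub, fderiv_fun_const,
    fderiv_fun_neg] at h
  simp only [pdx, pdy, pdz, ContinuousLinearMap.neg_apply, ContinuousLinearMap.zero_apply,
    Pi.zero_apply] at h ⊢
  linarith

lemma ex22 (p : Pt) : pdy ξ₂ p = 0 := by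
  have h := hF 1 0 2 p
  simp only [Ften, gm, cov, phiV, dd, E, c1, c2, c3, Matrix.cons_val_zero, Matrix.cons_val_one,
    Matrix.head_cons, Matrix.cons_val_two, Matrix.tail_cons, mul_one, mul_zero, zero_mul, one_mul,
    add_zero, zero_add, sub_zero, zero_sub, neg_zero, neg_mul, Prod.fst_sub, Prod.snd_sub, fderiv_fun_const,
    fderiv_fun_neg] at h
  simp only [pdx, pdy, pdz, ContinuousLinearMap.neg_apply, ContinuousLinearMap.zero_apply,
    Pi.zero_apply] at h ⊢
  linarith

lemma ex23 (p : Pt) : pdz ξ₂ p = (1/2) * pdy f p * ξ₃ p := by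
  have h := hF 2 2 0 p
  simp only [Ften, gm, cov, phiV, dd, E, c1, c2, c3, Matrix.cons_val_zero, Matrix.cons_val_one,
    Matrix.head_cons, Matrix.cons_val_two, Matrix.tail_cons, mul_one, mul_zero, zero_mul, one_mul,
    add_zero, zero_add, sub_zero, zero_sub, neg_zero, neg_mul, Prod.fst_sub, Prod.snd_sub, fderiv_fun_const,
    fderiv_fun_neg] at h
  simp only [pdx, pdy, pdz, ContinuousLinearMap.neg_apply, ContinuousLinearMap.zero_apply,
    Pi.zero_apply] at h ⊢
  linarith

lemma ex11 (p : Pt) : pdx ξ₁ p = -(1/2) * pdx f p * ξ₃ p := by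
  have h := hF 0 2 1 p
  simp only [Ften, gm, cov, phiV, dd, E, c1, c2, c3, Matrix.cons_val_zero, Matrix.cons_val_one,
    Matrix.head_cons, Matrix.cons_val_two, Matrix.tail_cons, mul_one, mul_zero, zero_mul, one_mul,
    add_zero, zero_add, sub_zero, zero_sub, neg_zero, neg_mul, Prod.fst_sub, Prod.snd_sub, fderiv_fun_const,
    fderiv_fun_neg] at h
  simp only [pdx, pdy, pdz, ContinuousLinearMap.neg_apply, ContinuousLinearMap.zero_apply,
    Pi.zero_apply] at h ⊢
  linarith

lemma ex12 (p : Pt) : pdy ξ₁ p = -(1/2) * pdy f p * ξ₃ p := by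
  have h := hF 1 2 1 p
  simp only [Ften, gm, cov, phiV, dd, E, c1, c2, c3, Matrix.cons_val_zero, Matrix.cons_val_one,
    Matrix.head_cons, Matrix.cons_val_two, Matrix.tail_cons, mul_one, mul_zero, zero_mul, one_mul,
    add_zero, zero_add, sub_zero, zero_sub, neg_zero, neg_mul, Prod.fst_sub, Prod.snd_sub, fderiv_fun_const,
    fderiv_fun_neg] at h
  simp only [pdx, pdy, pdz, ContinuousLinearMap.neg_apply, ContinuousLinearMap.zero_apply,
    Pi.zero_apply] at h ⊢
  linarith

lemma ex13 (p : Pt) : pdz ξ₁ p = -(1/2) * (pdz f p * ξ₃ p + pdy f p * ξ₂ p + pdx f p * ξ₁ p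
    + f p * pdx f p * ξ₃ p) := by
  have h := hF 2 2 1 p
  simp only [Ften, gm, cov, phiV, dd, E, c1, c2, c3, Matrix.cons_val_zero, Matrix.cons_val_one,
    Matrix.head_cons, Matrix.cons_val_two, Matrix.tail_cons, mul_one, mul_zero, zero_mul, one_mul,
    add_zero, zero_add, sub_zero, zero_sub, neg_zero, neg_mul, Prod.fst_sub, Prod.snd_sub, fderiv_fun_const,
    fderiv_fun_neg] at h
  simp only [pdx, pdy, pdz, ContinuousLinearMap.neg_apply, ContinuousLinearMap.zero_apply,
    Pi.zero_apply] at h ⊢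
  linarith
end Extract
def vx : Pt := ((1:ℝ), (0:ℝ), (0:ℝ))
def vy : Pt := ((0:ℝ), (1:ℝ), (0:ℝ))
def vz : Pt := ((0:ℝ), (0:ℝ), (1:ℝ))

section Second
variable {f ξ₁ ξ₂ ξ₃ : Pt → ℝ}
  (hf : ContDiff ℝ (⊤:ℕ∞) f) (h1 : ContDiff ℝ (⊤:ℕ∞) ξ₁)
  (h2 : ContDiff ℝ (⊤:ℕ∞) ξ₂) (h3 : ContDiff ℝ (⊤:ℕ∞) ξ₃)
  (hF : ∀ (i j k : Fin 3) (p : Pt), Ften f ξ₁ ξ₂ ξ₃ (E i) (E j) (E k) p = 0)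
include hf h1 h2 h3 hF

lemma d1 (p : Pt) : fxx f p * ξ₃ p = 0 := by
  have hsym := schwarz h3 vx vz p
  have e0 : ∀ q, pdv vx ξ₃ q = (fun _ => (0:ℝ)) q := fun q => ex31 hF q
  have e3 : ∀ q, pdv vz ξ₃ q = (fun q => (1/2) * pdv vx f q * ξ₃ q) q := fun q => ex33 hF q
  have hR : pdv vz (pdv vx ξ₃) p = 0 := by
    rw [pdv_congr e0 vz p]; exact pdv_const 0 vz
  have hL : pdv vx (pdv vz ξ₃) p
      = (1/2) * pdv vx (pdv vx f) p * ξ₃ p + (1/2 * pdv vx f p) * pdv vx ξ₃ p := by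
    rw [pdv_congr e3 vx p,
      pdv_mul (da (contDiff_const.mul (sm_pdv hf vx)) p) (da h3 p) vx,
      pdv_const_mul (da (sm_pdv hf vx) p)]
  have hx3 : pdv vx ξ₃ p = 0 := ex31 hF p
  have hfxx : fxx f p = pdv vx (pdv vx f) p := rfl
  rw [hsym, hR, hx3] at hL
  rw [hfxx]; linarith

lemma d2 (p : Pt) : fxy f p * ξ₃ p = 0 := by
  have hsym := schwarz h3 vy vz p
  have e0 : ∀ q, pdv vy ξ₃ q = (fun _ => (0:ℝ)) q := fun q => ex32 hF q
  have e3 : ∀ q, pdv vz ξ₃ q = (fun q => (1/2) * pdv vx f q * ξ₃ q) q := fun q => ex33 hF q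
  have hR : pdv vz (pdv vy ξ₃) p = 0 := by
    rw [pdv_congr e0 vz p]; exact pdv_const 0 vz
  have hL : pdv vy (pdv vz ξ₃) p
      = (1/2) * pdv vy (pdv vx f) p * ξ₃ p + (1/2 * pdv vx f p) * pdv vy ξ₃ p := by
    rw [pdv_congr e3 vy p,
      pdv_mul (da (contDiff_const.mul (sm_pdv hf vx)) p) (da h3 p) vy,
      pdv_const_mul (da (sm_pdv hf vx) p)]
  have hy3 : pdv vy ξ₃ p = 0 := ex32 hF p
  have hfxy : fxy f p = pdv vy (pdv vx f) p := rfl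
  rw [hsym, hR, hy3] at hL
  rw [hfxy]; linarith

lemma d3 (p : Pt) : fyy f p * ξ₃ p = 0 := by
  have hsym := schwarz h2 vy vz p
  have e0 : ∀ q, pdv vy ξ₂ q = (fun _ => (0:ℝ)) q := fun q => ex22 hF q
  have e3 : ∀ q, pdv vz ξ₂ q = (fun q => (1/2) * pdv vy f q * ξ₃ q) q := fun q => ex23 hF q
  have hR : pdv vz (pdv vy ξ₂) p = 0 := by
    rw [pdv_congr e0 vz p]; exact pdv_const 0 vz
  have hL : pdv vy (pdv vz ξ₂) p
      = (1/2) * pdv vy (pdv vy f) p * ξ₃ p + (1/2 * pdv vy f p) * pdv vy ξ₃ p := by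
    rw [pdv_congr e3 vy p,
      pdv_mul (da (contDiff_const.mul (sm_pdv hf vy)) p) (da h3 p) vy,
      pdv_const_mul (da (sm_pdv hf vy) p)]
  have hy3 : pdv vy ξ₃ p = 0 := ex32 hF p
  have hfyy : fyy f p = pdv vy (pdv vy f) p := rfl
  rw [hsym, hR, hy3] at hL
  rw [hfyy]; linarith
end Second
section Second2
variable {f ξ₁ ξ₂ ξ₃ : Pt → ℝ}
  (hf : ContDiff ℝ (⊤:ℕ∞) f) (h1 : ContDiff ℝ (⊤:ℕ∞) ξ₁)
  (h2 : ContDiff ℝ (⊤:ℕ∞) ξ₂) (h3 : ContDiff ℝ (⊤:ℕ∞) ξ₃)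
  (hF : ∀ (i j k : Fin 3) (p : Pt), Ften f ξ₁ ξ₂ ξ₃ (E i) (E j) (E k) p = 0)
include hf h1 h2 h3 hF

lemma d4 (p : Pt) : fxy f p * ξ₂ p + fxx f p * (ξ₁ p + f p * ξ₃ p) = 0 := by
  have smfx := sm_pdv hf vx
  have smfy := sm_pdv hf vy
  have smfz := sm_pdv hf vz
  have x31 : pdv vx ξ₃ p = 0 := ex31 hF p
  have x21 : pdv vx ξ₂ p = 0 := ex21 hF p
  have x11 : pdv vx ξ₁ p = -(1/2) * pdv vx f p * ξ₃ p := ex11 hF p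
  have x33 : pdv vz ξ₃ p = (1/2) * pdv vx f p * ξ₃ p := ex33 hF p
  have e11 : ∀ q, pdv vx ξ₁ q = (fun q => -(1/2) * pdv vx f q * ξ₃ q) q := fun q => ex11 hF q
  have e13 : ∀ q, pdv vz ξ₁ q = (fun q => -(1/2) * (pdv vz f q * ξ₃ q + pdv vy f q * ξ₂ q
      + pdv vx f q * ξ₁ q + f q * pdv vx f q * ξ₃ q)) q := fun q => ex13 hF q
  have key := schwarz h1 vx vz p
  rw [pdv_congr e13 vx p, pdv_congr e11 vz p] at key
  rw [pdv_const_mul (c := -(1/2))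
      (da ((((smfz.mul h3).add (smfy.mul h2)).add (smfx.mul h1)).add ((hf.mul smfx).mul h3)) p) vx,
    pdv_add (da (((smfz.mul h3).add (smfy.mul h2)).add (smfx.mul h1)) p) (da ((hf.mul smfx).mul h3) p) vx,
    pdv_add (da ((smfz.mul h3).add (smfy.mul h2)) p) (da (smfx.mul h1) p) vx,
    pdv_add (da (smfz.mul h3) p) (da (smfy.mul h2) p) vx,
    pdv_mul (da smfz p) (da h3 p) vx,
    pdv_mul (da smfy p) (da h2 p) vx,
    pdv_mul (da smfx p) (da h1 p) vx,
    pdv_mul (da (hf.mul smfx) p) (da h3 p) vx,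
    pdv_mul (da hf p) (da smfx p) vx,
    pdv_mul (da (contDiff_const.mul smfx) p) (da h3 p) vz,
    pdv_const_mul (c := -(1/2)) (da smfx p) vz] at key
  rw [schwarz hf vx vz p, schwarz hf vx vy p, x31, x21, x11, x33] at key
  have gxy : fxy f p = pdv vy (pdv vx f) p := rfl
  have gxx : fxx f p = pdv vx (pdv vx f) p := rfl
  rw [gxy, gxx]
  linear_combination (-2 : ℝ) * key

lemma d5 (p : Pt) : fyy f p * ξ₂ p + fxy f p * (ξ₁ p + f p * ξ₃ p) = 0 := by
  have smfx := sm_pdv hf vx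
  have smfy := sm_pdv hf vy
  have smfz := sm_pdv hf vz
  have x32 : pdv vy ξ₃ p = 0 := ex32 hF p
  have x22 : pdv vy ξ₂ p = 0 := ex22 hF p
  have x12 : pdv vy ξ₁ p = -(1/2) * pdv vy f p * ξ₃ p := ex12 hF p
  have x33 : pdv vz ξ₃ p = (1/2) * pdv vx f p * ξ₃ p := ex33 hF p
  have e12 : ∀ q, pdv vy ξ₁ q = (fun q => -(1/2) * pdv vy f q * ξ₃ q) q := fun q => ex12 hF q
  have e13 : ∀ q, pdv vz ξ₁ q = (fun q => -(1/2) * (pdv vz f q * ξ₃ q + pdv vy f q * ξ₂ q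
      + pdv vx f q * ξ₁ q + f q * pdv vx f q * ξ₃ q)) q := fun q => ex13 hF q
  have key := schwarz h1 vy vz p
  rw [pdv_congr e13 vy p, pdv_congr e12 vz p] at key
  rw [pdv_const_mul (c := -(1/2))
      (da ((((smfz.mul h3).add (smfy.mul h2)).add (smfx.mul h1)).add ((hf.mul smfx).mul h3)) p) vy,
    pdv_add (da (((smfz.mul h3).add (smfy.mul h2)).add (smfx.mul h1)) p) (da ((hf.mul smfx).mul h3) p) vy,
    pdv_add (da ((smfz.mul h3).add (smfy.mul h2)) p) (da (smfx.mul h1) p) vy,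
    pdv_add (da (smfz.mul h3) p) (da (smfy.mul h2) p) vy,
    pdv_mul (da smfz p) (da h3 p) vy,
    pdv_mul (da smfy p) (da h2 p) vy,
    pdv_mul (da smfx p) (da h1 p) vy,
    pdv_mul (da (hf.mul smfx) p) (da h3 p) vy,
    pdv_mul (da hf p) (da smfx p) vy,
    pdv_mul (da (contDiff_const.mul smfy) p) (da h3 p) vz,
    pdv_const_mul (c := -(1/2)) (da smfy p) vz] at key
  rw [schwarz hf vy vz p, x32, x22, x12, x33] at key
  have gxy : fxy f p = pdv vy (pdv vx f) p := rfl
  have gyy : fyy f p = pdv vy (pdv vy f) p := rfl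
  rw [gxy, gyy]
  linear_combination (-2 : ℝ) * key
end Second2
set_option maxHeartbeats 1000000 in
/-- Corollary 5.1: a paracosymplectic almost paracontact metric 3-dimensional Walker
manifold is, at every point, either flat or η-Einstein. -/
theorem paracosymplectic_flat_or_etaEinstein (f ξ₁ ξ₂ ξ₃ : Pt → ℝ)
    (hf : ContDiff ℝ (⊤ : ℕ∞) f) (h1 : ContDiff ℝ (⊤ : ℕ∞) ξ₁)
    (h2 : ContDiff ℝ (⊤ : ℕ∞) ξ₂) (h3 : ContDiff ℝ (⊤ : ℕ∞) ξ₃)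
    (hconstr : ∀ p : Pt, ξ₂ p ^ 2 + f p * ξ₃ p ^ 2 + 2 * ξ₁ p * ξ₃ p = 1)
    (hF : ∀ (i j k : Fin 3) (p : Pt), Ften f ξ₁ ξ₂ ξ₃ (E i) (E j) (E k) p = 0) :
    ∀ p : Pt, (fxx f p = 0 ∧ fxy f p = 0 ∧ fyy f p = 0) ∨
      ∃ a b : ℝ, a ≠ 0 ∧ b ≠ 0 ∧ ∀ i j : Fin 3,
        rhoT f (E i) (E j) p = a * gm f (E i) (E j) p
          + b * etaV f ξ₁ ξ₂ ξ₃ (E i) p * etaV f ξ₁ ξ₂ ξ₃ (E j) p := by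
  intro p
  by_cases h30 : ξ₃ p = 0
  · -- ξ₃ p = 0 : ξ₂ p ≠ 0
    have h22' : ξ₂ p * ξ₂ p = 1 := by
      have hc := hconstr p
      linear_combination hc + (-(f p) * ξ₃ p - 2 * ξ₁ p) * h30
    have hne2 : ξ₂ p ≠ 0 := by
      intro h; rw [h] at h22'; norm_num at h22'
    have hd4 := d4 hf h1 h2 h3 hF p
    have hd5 := d5 hf h1 h2 h3 hF p
    by_cases hxx : fxx f p = 0
    · left
      have hxy0 : fxy f p * ξ₂ p = 0 := by
        linear_combination hd4 + (-(ξ₁ p) - f p * ξ₃ p) * hxx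
      have hxy : fxy f p = 0 := (mul_eq_zero.mp hxy0).resolve_right hne2
      have hyy0 : fyy f p * ξ₂ p = 0 := by
        linear_combination hd5 + (-(ξ₁ p) - f p * ξ₃ p) * hxy
      exact ⟨hxx, hxy, (mul_eq_zero.mp hyy0).resolve_right hne2⟩
    · right
      have hxy2 : fxy f p = -(fxx f p) * (ξ₁ p * ξ₂ p) := by
        have hxyA : fxy f p * ξ₂ p = -(fxx f p * ξ₁ p) := by
          linear_combination hd4 + (-(fxx f p) * f p) * h30
        linear_combination (ξ₂ p) * hxyA + (-(fxy f p)) * h22'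
      have hyy : fyy f p = fxx f p * (ξ₁ p * ξ₁ p) := by
        apply mul_left_cancel₀ hne2
        linear_combination hd5 + (-(ξ₁ p)) * hxy2 + (-(fxy f p * f p)) * h30
      refine ⟨fxx f p / 2, -(fxx f p / 2), div_ne_zero hxx two_ne_zero, neg_ne_zero.mpr (div_ne_zero hxx two_ne_zero), ?_⟩
      · intro i j
        fin_cases i <;> fin_cases j <;>
          simp only [rhoT, gm, etaV, E, c1, c2, c3, Fin.zero_eta, Fin.mk_one, Fin.reduceFinMk,
            Matrix.cons_val_zero, Matrix.cons_val_one,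
            Matrix.head_cons, Matrix.cons_val_two, Matrix.tail_cons, mul_one, mul_zero, zero_mul,
            one_mul, add_zero, zero_add, Fin.isValue] <;>
          (try simp only [h30, mul_zero, zero_mul, add_zero, zero_add, mul_one, one_mul]) <;>
          first
            | ring1
            | linear_combination (fxx f p / 2) * h22'
            | linear_combination (-(fxx f p) / 2) * h22'
            | linear_combination (1/2 : ℝ) * hxy2
            | linear_combination (-(1:ℝ)/2) * hxy2
            | linear_combination (-(1:ℝ)/2) * hyy
            | linear_combination (1/2 : ℝ) * hyy
  · left
    exact ⟨(mul_eq_zero.mp (d1 hf h1 h2 h3 hF p)).resolve_right h30,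
      (mul_eq_zero.mp (d2 hf h1 h2 h3 hF p)).resolve_right h30,
      (mul_eq_zero.mp (d3 hf h1 h2 h3 hF p)).resolve_right h30⟩
end
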